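/- Let F be a continuous distribution function on [0,∞), W_1,...,W_n i.i.d. with distribution F, and F_n the empirical CDF. Let b(n) > 0, c > 0. Then P( sup_{x ≥ b(n)} (1 − F_n(x)) > c/n ) ≤ exp(n·(1−F(b(n)))) · (n(1−F(b(n))))^{⌈c⌉}. -/

import Mathlib

open MeasureTheory ProbabilityTheory Real

/-- Tail bound for the empirical distribution function far in the tail:
`P(sup_{x ≥ b} (1 - F_n(x)) > c/n) ≤ exp(n (1-F(b))) (n(1-F(b)))^⌈c⌉`. -/
theorem stmt9 {Ω : Type*} [MeasureSpace Ω] [IsProbabilityMeasure (ℙ : Measure Ω)]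
    (n : ℕ) (hn : 0 < n) (W : Fin n → Ω → ℝ)
    (hmeas : ∀ i, Measurable (W i))
    (hindep : iIndepFun W ℙ)
    (F : ℝ → ℝ) (hF : Continuous F) (hFsupp : ∀ x < (0 : ℝ), F x = 0)
    (hFdist : ∀ i x, (ℙ {ω | W i ω ≤ x}).toReal = F x)
    (b c : ℝ) (hb : 0 < b) (hc : 0 < c) :
    ℙ {ω | ∃ x ≥ b,
        c / n < 1 - ((Finset.univ.filter (fun i : Fin n => W i ω ≤ x)).card : ℝ) / n}
      ≤ ENNReal.ofReal (Real.exp (n * (1 - F b)) * (n * (1 - F b)) ^ (⌈c⌉₊ : ℕ)) := by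
  set k := ⌈c⌉₊ with hk
  set p := 1 - F b with hp
  have hnR : (0 : ℝ) < n := Nat.cast_pos.mpr hn
  -- basic facts about F b
  have hFb0 : 0 ≤ F b := by rw [← hFdist ⟨0, hn⟩ b]; exact ENNReal.toReal_nonneg
  have hFb1 : F b ≤ 1 := by
    rw [← hFdist ⟨0, hn⟩ b]
    exact ENNReal.toReal_le_of_le_ofReal one_pos.le (by simpa using prob_le_one)
  have hp0 : 0 ≤ p := by simp [hp]; linarith
  -- probability of exceeding b
  have hA : ∀ i, MeasurableSet {ω | W i ω ≤ b} := fun i =>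
    (hmeas i) measurableSet_Iic
  have hq : ∀ i : Fin n, ℙ (W i ⁻¹' Set.Ioi b) = ENNReal.ofReal p := by
    intro i
    have hcompl : W i ⁻¹' Set.Ioi b = {ω | W i ω ≤ b}ᶜ := by
      ext ω; simp [not_le]
    have hAb : ℙ {ω | W i ω ≤ b} = ENNReal.ofReal (F b) := by
      rw [← hFdist i b, ENNReal.ofReal_toReal (measure_ne_top _ _)]
    rw [hcompl, measure_compl (hA i) (measure_ne_top _ _), measure_univ, hAb, hp,
      ENNReal.ofReal_sub 1 hFb0, ENNReal.ofReal_one]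
  -- the event is contained in a union over k-subsets
  have hsub : {ω | ∃ x ≥ b,
      c / n < 1 - ((Finset.univ.filter (fun i : Fin n => W i ω ≤ x)).card : ℝ) / n} ⊆
      ⋃ S ∈ Finset.powersetCard k (Finset.univ : Finset (Fin n)),
        ⋂ i ∈ S, W i ⁻¹' Set.Ioi b := by
    intro ω hω
    obtain ⟨x, hxb, hx⟩ := hω
    set T := Finset.univ.filter (fun i : Fin n => W i ω ≤ x) with hT
    have hcard : c < (n : ℝ) - T.card := by
      have h := (div_lt_iff₀ hnR).mp hx
      have h2 : (1 - (T.card : ℝ) / n) * n = (n : ℝ) - T.card := by field_simp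
      linarith
    -- the complement of T has more than c elements
    have hTc : (Tᶜ.card : ℝ) = (n : ℝ) - T.card := by
      rw [Finset.card_compl]
      have := Finset.card_filter_le (Finset.univ : Finset (Fin n))
        (fun i : Fin n => W i ω ≤ x)
      push_cast [hT]
      rw [Nat.cast_sub (by simpa using this)]
      simp
    have hkle : k ≤ Tᶜ.card := by
      apply Nat.ceil_le.mpr
      rw [hTc]; linarith
    obtain ⟨S, hSsub, hScard⟩ := Finset.exists_subset_card_eq hkle
    refine Set.mem_biUnion (Finset.mem_powersetCard.mpr ⟨Finset.subset_univ S, hScard⟩) ?_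
    refine Set.mem_iInter₂.mpr fun i hi => ?_
    have : i ∈ Tᶜ := hSsub hi
    simp only [hT, Finset.mem_compl, Finset.mem_filter, Finset.mem_univ, true_and,
      not_le] at this
    exact lt_of_le_of_lt hxb this
  refine le_trans (measure_mono hsub) ?_
  refine le_trans (measure_biUnion_finset_le _ _) ?_
  -- each intersection has measure p^k by independence
  have hmeasS : ∀ S ∈ Finset.powersetCard k (Finset.univ : Finset (Fin n)),
      ℙ (⋂ i ∈ S, W i ⁻¹' Set.Ioi b) = ENNReal.ofReal p ^ k := by
    intro S hS
    rw [hindep.meas_biInter (fun i _ => ⟨Set.Ioi b, measurableSet_Ioi, rfl⟩)]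
    rw [Finset.prod_congr rfl (fun i _ => hq i), Finset.prod_const,
      (Finset.mem_powersetCard.mp hS).2]
  rw [Finset.sum_congr rfl hmeasS, Finset.sum_const, Finset.card_powersetCard,
    Finset.card_univ, Fintype.card_fin, nsmul_eq_mul]
  -- final arithmetic
  calc (n.choose k : ENNReal) * ENNReal.ofReal p ^ k
      ≤ (n : ENNReal) ^ k * ENNReal.ofReal p ^ k := by
        gcongr
        exact_mod_cast Nat.choose_le_pow n k
    _ = ENNReal.ofReal ((n * p) ^ k) := by
        rw [← mul_pow, ← ENNReal.ofReal_natCast n, ← ENNReal.ofReal_mul (by positivity),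
          ← ENNReal.ofReal_pow (by positivity)]
    _ ≤ ENNReal.ofReal (Real.exp (n * p) * (n * p) ^ k) := by
        apply ENNReal.ofReal_le_ofReal
        nlinarith [Real.one_le_exp (by positivity : (0:ℝ) ≤ (n:ℝ) * p),
          pow_nonneg (by positivity : (0:ℝ) ≤ (n:ℝ) * p) k]
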